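/- Let $l \ge 2$ and let $S \subseteq \{1,\dots,l-1\}$ with elements $i_1 < \cdots < i_k$. Define $h_{i_j} = i_j + 2\sum_{s=j+1}^k (-1)^{s-j} i_s + (-1)^{k-j+1}(l-\tfrac12)$. Then: (a) $h_{i_k} < 0$; (b) for every $1 \le s \le t \le k$ with $t - s$ odd, $h_{i_s} + h_{i_{s+1}} + \cdots + h_{i_t} = -\sum_{j=s,\, j \equiv s \ (2)}^{t-1} (i_{j+1} - i_j) \ge -(i_t - i_s)$; in particular every such partial sum over an even number of consecutive terms is a nonpositive integer bounded below by $-(i_t - i_s)$. -/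
import Mathlib


/-- Properties of the coordinates `h_{i_j}` of the admissible weight `μ_S` (0-indexed
`j = 0, …, k-1`): (a) `h_{i_k} < 0`; (b) for `s ≤ t` with `t - s` odd, the partial sum
`h_{i_s} + ⋯ + h_{i_t}` equals `-∑_{j ≡ s (2), s ≤ j < t} (i_{j+1} - i_j)`, is at least
`-(i_t - i_s)`, is nonpositive, and is an integer. -/
theorem stmt_19 (l k : ℕ) (hl : 2 ≤ l) (i : ℕ → ℕ)
    (hmono : ∀ a b, a < b → b < k → i a < i b)
    (hrange : ∀ j < k, 1 ≤ i j ∧ i j ≤ l - 1) :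
    let h : ℕ → ℚ := fun j => (i j : ℚ)
      + 2 * ∑ s ∈ Finset.Ico (j + 1) k, (-1 : ℚ) ^ (s - j) * (i s : ℚ)
      + (-1 : ℚ) ^ (k - j) * ((l : ℚ) - 1 / 2)
    (1 ≤ k → h (k - 1) < 0) ∧
    ∀ s t, s ≤ t → t < k → Odd (t - s) →
      (∑ j ∈ Finset.Icc s t, h j
          = -∑ j ∈ (Finset.Ico s t).filter (fun j => (j - s) % 2 = 0),
              ((i (j + 1) : ℚ) - (i j : ℚ))) ∧
      -((i t : ℚ) - (i s : ℚ)) ≤ ∑ j ∈ Finset.Icc s t, h j ∧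
      ∑ j ∈ Finset.Icc s t, h j ≤ 0 ∧
      ∃ z : ℤ, ∑ j ∈ Finset.Icc s t, h j = (z : ℚ) := by
  intro h
  -- key: consecutive pairs sum to `i j - i (j+1)`
  have hpair : ∀ j, j + 1 < k → h j + h (j + 1) = (i j : ℚ) - (i (j + 1) : ℚ) := by
    intro j hj
    have e1 : ∑ s ∈ Finset.Ico (j + 1) k, (-1 : ℚ) ^ (s - j) * (i s : ℚ)
        = -(i (j + 1) : ℚ)
          - ∑ s ∈ Finset.Ico (j + 1 + 1) k, (-1 : ℚ) ^ (s - (j + 1)) * (i s : ℚ) := by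
      rw [Finset.sum_eq_sum_Ico_succ_bot hj]
      have hc : ∀ s ∈ Finset.Ico (j + 1 + 1) k,
          (-1 : ℚ) ^ (s - j) * (i s : ℚ) = -((-1 : ℚ) ^ (s - (j + 1)) * (i s : ℚ)) := by
        intro s hs
        simp only [Finset.mem_Ico] at hs
        have hd : s - j = (s - (j + 1)) + 1 := by omega
        rw [hd, pow_succ]; ring
      rw [Finset.sum_congr rfl hc]
      have hd : (j + 1) - j = 1 := by omega
      rw [hd, Finset.sum_neg_distrib]
      ring
    have e2 : (-1 : ℚ) ^ (k - j) = -(-1 : ℚ) ^ (k - (j + 1)) := by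
      have hd : k - j = (k - (j + 1)) + 1 := by omega
      rw [hd, pow_succ]; ring
    simp only [h]
    rw [e1, e2]
    ring
  have hsum : ∀ n s, s + (2 * n + 1) < k →
      ∑ j ∈ Finset.Icc s (s + (2 * n + 1)), h j
        = ∑ m ∈ Finset.range (n + 1), ((i (s + 2 * m) : ℚ) - (i (s + 2 * m + 1) : ℚ)) := by
    intro n
    induction n with
    | zero =>
      intro s hs
      have e : s + (2 * 0 + 1) = s + 1 := by ring
      rw [e, Finset.sum_Icc_succ_top (by omega), Finset.Icc_self, Finset.sum_singleton]
      rw [hpair s (by omega)]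
      simp
    | succ m ih =>
      intro s hs
      have e : s + (2 * (m + 1) + 1) = (s + (2 * m + 1) + 1) + 1 := by ring
      rw [e, Finset.sum_Icc_succ_top (by omega), Finset.sum_Icc_succ_top (by omega),
        ih s (by omega)]
      conv_rhs => rw [Finset.sum_range_succ]
      have hp := hpair (s + (2 * m + 1) + 1) (by omega)
      have e1 : s + 2 * (m + 1) = s + (2 * m + 1) + 1 := by ring
      rw [e1]
      linarith
  have hfilter : ∀ n s,
      (Finset.Ico s (s + (2 * n + 1))).filter (fun j => (j - s) % 2 = 0)
        = (Finset.range (n + 1)).image (fun m => s + 2 * m) := by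
    intro n s
    ext j
    simp only [Finset.mem_filter, Finset.mem_Ico, Finset.mem_image, Finset.mem_range]
    constructor
    · rintro ⟨⟨h1, h2⟩, h3⟩
      exact ⟨(j - s) / 2, by omega, by omega⟩
    · rintro ⟨m, hm, rfl⟩
      refine ⟨⟨by omega, by omega⟩, by omega⟩
  have htel : ∀ t, ∀ s, s ≤ t →
      ∑ j ∈ Finset.Ico s t, ((i (j + 1) : ℚ) - (i j : ℚ)) = (i t : ℚ) - (i s : ℚ) := by
    intro t
    induction t with
    | zero =>
      intro s hs
      have hs0 : s = 0 := by omega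
      subst hs0
      simp
    | succ u ih =>
      intro s hs
      rcases Nat.lt_or_ge s (u + 1) with hlt | hge
      · have hs' : s ≤ u := by omega
        rw [Finset.sum_Ico_succ_top hs', ih s hs']
        ring
      · have : s = u + 1 := by omega
        subst this
        simp
  refine ⟨?_, ?_⟩
  · intro hk
    have hk1 : k - 1 + 1 = k := by omega
    have hk2 : k - (k - 1) = 1 := by omega
    have he : Finset.Ico (k - 1 + 1) k = ∅ := by rw [hk1]; exact Finset.Ico_self k
    have hle : i (k - 1) ≤ l - 1 := (hrange (k - 1) (by omega)).2
    have h2 : (i (k - 1) : ℚ) ≤ ((l - 1 : ℕ) : ℚ) := Nat.cast_le.2 hle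
    have h3 : ((l - 1 : ℕ) : ℚ) = (l : ℚ) - 1 := by
      rw [Nat.cast_sub (by omega)]; simp
    simp only [h, he, Finset.sum_empty, hk2, pow_one]
    rw [h3] at h2
    linarith
  · intro s t hst htk hodd
    have ht : t = s + (2 * ((t - s) / 2) + 1) := by
      obtain ⟨m, hm⟩ := hodd
      omega
    set n := (t - s) / 2 with hn
    clear_value n
    subst ht
    have hS := hsum n s htk
    have hF := hfilter n s
    have hinj : Set.InjOn (fun m => s + 2 * m) (Finset.range (n + 1)) := by
      intro a _ b _ hab
      have hab' : s + 2 * a = s + 2 * b := hab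
      omega
    have hFsum : ∑ j ∈ (Finset.Ico s (s + (2 * n + 1))).filter (fun j => (j - s) % 2 = 0),
        ((i (j + 1) : ℚ) - (i j : ℚ))
        = ∑ m ∈ Finset.range (n + 1), ((i (s + 2 * m + 1) : ℚ) - (i (s + 2 * m) : ℚ)) := by
      rw [hF, Finset.sum_image hinj]
    refine ⟨?_, ?_, ?_, ?_⟩
    · rw [hS, hFsum, ← Finset.sum_neg_distrib]
      exact Finset.sum_congr rfl fun m _ => by ring
    · rw [hS]
      have hsub : ∑ m ∈ Finset.range (n + 1), ((i (s + 2 * m + 1) : ℚ) - (i (s + 2 * m) : ℚ))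
          ≤ (i (s + (2 * n + 1)) : ℚ) - (i s : ℚ) := by
        rw [← htel (s + (2 * n + 1)) s (by omega), ← hFsum]
        refine Finset.sum_le_sum_of_subset_of_nonneg (Finset.filter_subset _ _) ?_
        intro j hj _
        simp only [Finset.mem_Ico] at hj
        have := hmono j (j + 1) (by omega) (by omega)
        have : (i j : ℚ) < (i (j + 1) : ℚ) := by exact_mod_cast this
        linarith
      have : ∑ m ∈ Finset.range (n + 1), ((i (s + 2 * m) : ℚ) - (i (s + 2 * m + 1) : ℚ))
          = -∑ m ∈ Finset.range (n + 1), ((i (s + 2 * m + 1) : ℚ) - (i (s + 2 * m) : ℚ)) := by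
        rw [← Finset.sum_neg_distrib]
        exact Finset.sum_congr rfl fun m _ => by ring
      rw [this]
      linarith
    · rw [hS]
      refine Finset.sum_nonpos fun m hm => ?_
      simp only [Finset.mem_range] at hm
      have := hmono (s + 2 * m) (s + 2 * m + 1) (by omega) (by omega)
      have : (i (s + 2 * m) : ℚ) < (i (s + 2 * m + 1) : ℚ) := by exact_mod_cast this
      linarith
    · refine ⟨∑ m ∈ Finset.range (n + 1), ((i (s + 2 * m) : ℤ) - (i (s + 2 * m + 1) : ℤ)), ?_⟩
      rw [hS]
      push_cast
      rfl
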